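/- On X = ℂ* = ℂ \ {0} with ω = z^k dz for an integer k ≠ −1, one has ρ(a, z^k dz, ℂ*) = |a^{k+1}/(k+1)| for every a ∈ ℂ*; in particular ρ(a, z^k dz, ℂ*) → 0 as a → 0 when k ≥ 0, and ρ(a, z^k dz, ℂ*) → 0 as a → ∞ when k ≤ −2. Moreover, ψ(a) = max{−log ρ(a, dz, ℂ*), −log ρ(a, z^{−2} dz, ℂ*)} is a continuous subharmonic function on ℂ* tending to +∞ both as a → 0 and as a → ∞. -/

import Mathlib

open scoped ENNReal Topology Real
open Set Metric

noncomputable section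

/-- The scalar `ρ(a, ω, Ω)` for a holomorphic 1-form `ω = dG` on a domain of `ℂ`
with primitive `G`: the supremum of radii `r > 0` such that the local inverse of
the Abelian integral `ζ(x) = ∫ₐˣ ω = G(x) − G(a)` extends holomorphically to the
disk `{|ζ| < r}` with values in `Ω`. -/
def rhoC (G : ℂ → ℂ) (a : ℂ) (Ω : Set ℂ) : ℝ≥0∞ :=
  ⨆ r ∈ {r : ℝ | 0 < r ∧ ∃ φ : ℂ → ℂ, DifferentiableOn ℂ φ (Metric.ball (0 : ℂ) r) ∧
    φ 0 = a ∧ Set.MapsTo φ (Metric.ball (0 : ℂ) r) Ω ∧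
    ∀ w ∈ Metric.ball (0 : ℂ) r, G (φ w) - G a = w}, ENNReal.ofReal r

/-- `u` is subharmonic on `s ⊆ ℂ`: upper semicontinuous and satisfying the
sub-mean-value inequality on circles. -/
def SubharmonicOn (u : ℂ → ℝ) (s : Set ℂ) : Prop :=
  UpperSemicontinuousOn u s ∧
  ∀ c : ℂ, ∀ r : ℝ, 0 < r → Metric.closedBall c r ⊆ s →
    u c ≤ (1 / (2 * Real.pi)) * ∫ θ in (0 : ℝ)..(2 * Real.pi),
      u (c + (r : ℂ) * Complex.exp ((θ : ℂ) * Complex.I))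

lemma ball_one_slit {z : ℂ} (h : z ∈ ball (1:ℂ) 1) : z ∈ Complex.slitPlane := by
  left
  have h1 : ‖z - 1‖ < 1 := by simpa [Complex.dist_eq] using h
  have h2 : |(z - 1).re| ≤ ‖z - 1‖ := Complex.abs_re_le_norm _
  have : |z.re - 1| < 1 := by simpa using h2.trans_lt h1
  have := abs_lt.mp this
  linarith [this.1]

lemma rho_eq (n : ℤ) (hn : n ≠ 0) (a : ℂ) (ha : a ≠ 0) :
    rhoC (fun z => z ^ n / (n : ℂ)) a {(0 : ℂ)}ᶜ
      = ENNReal.ofReal (‖a ^ n / (n : ℂ)‖) := by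
  have hnC : (n : ℂ) ≠ 0 := Int.cast_ne_zero.mpr hn
  have han : a ^ n ≠ 0 := zpow_ne_zero n ha
  set R : ℝ := ‖a ^ n / (n : ℂ)‖ with hR
  have hR0 : 0 < R := by
    rw [hR]
    exact norm_pos_iff.mpr (div_ne_zero han hnC)
  have hRval : R = ‖a ^ n‖ / ‖(n : ℂ)‖ := by
    rw [hR, norm_div]
  set φ : ℂ → ℂ := fun w => a * Complex.exp (Complex.log (1 + (n : ℂ) * w / a ^ n) / (n : ℂ))
    with hφ
  have hmem : ∀ w ∈ ball (0:ℂ) R, 1 + (n : ℂ) * w / a ^ n ∈ ball (1:ℂ) 1 := by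
    intro w hw
    have hw' : ‖w‖ < R := by simpa [Complex.dist_eq] using hw
    simp only [mem_ball, Complex.dist_eq, add_sub_cancel_left]
    rw [norm_div, norm_mul]
    rw [div_lt_one (norm_pos_iff.mpr han)]
    calc ‖(n:ℂ)‖ * ‖w‖ < ‖(n:ℂ)‖ * R := by
          exact mul_lt_mul_of_pos_left hw' (norm_pos_iff.mpr hnC)
      _ = ‖a ^ n‖ := by
          rw [hRval]; field_simp
  have hne : ∀ w ∈ ball (0:ℂ) R, 1 + (n : ℂ) * w / a ^ n ≠ 0 := fun w hw => by
    intro h0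
    have := hmem w hw
    rw [h0] at this
    simp at this
  have hpow : ∀ w ∈ ball (0:ℂ) R, φ w ^ n = a ^ n + (n : ℂ) * w := by
    intro w hw
    rw [hφ]
    simp only
    rw [mul_zpow, ← Complex.exp_int_mul]
    rw [mul_div_cancel₀ _ hnC, Complex.exp_log (hne w hw)]
    field_simp
  have hSub : ∀ r ∈ {r : ℝ | 0 < r ∧ ∃ φ : ℂ → ℂ,
      DifferentiableOn ℂ φ (Metric.ball (0 : ℂ) r) ∧
      φ 0 = a ∧ Set.MapsTo φ (Metric.ball (0 : ℂ) r) {(0:ℂ)}ᶜ ∧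
      ∀ w ∈ Metric.ball (0 : ℂ) r, (fun z => z ^ n / (n : ℂ)) (φ w)
        - (fun z => z ^ n / (n : ℂ)) a = w}, r ≤ R := by
    rintro r ⟨hr0, ψ, hdiff, hψ0, hmaps, heq⟩
    by_contra hlt
    push_neg at hlt
    set w₀ : ℂ := -(a ^ n) / (n : ℂ) with hw₀
    have hw₀mem : w₀ ∈ ball (0:ℂ) r := by
      simp only [mem_ball, Complex.dist_eq, sub_zero, hw₀]
      calc ‖-(a^n) / (n:ℂ)‖ = R := by rw [hR]; simp [neg_div]
        _ < r := hlt
    have := heq w₀ hw₀mem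
    simp only at this
    have hz : ψ w₀ ^ n = 0 := by
      rw [hw₀] at this
      have h1 : ψ w₀ ^ n / (n:ℂ) = 0 := by linear_combination this
      rcases div_eq_zero_iff.mp h1 with h | h
      · exact h
      · exact absurd h hnC
    have := (zpow_eq_zero_iff hn).mp hz
    exact hmaps hw₀mem this
  have hmemS : R ∈ {r : ℝ | 0 < r ∧ ∃ φ : ℂ → ℂ,
      DifferentiableOn ℂ φ (Metric.ball (0 : ℂ) r) ∧
      φ 0 = a ∧ Set.MapsTo φ (Metric.ball (0 : ℂ) r) {(0:ℂ)}ᶜ ∧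
      ∀ w ∈ Metric.ball (0 : ℂ) r, (fun z => z ^ n / (n : ℂ)) (φ w)
        - (fun z => z ^ n / (n : ℂ)) a = w} := by
    refine ⟨hR0, φ, ?_, ?_, ?_, ?_⟩
    · intro w hw
      apply DifferentiableAt.differentiableWithinAt
      apply DifferentiableAt.const_mul
      apply DifferentiableAt.cexp
      apply DifferentiableAt.div_const
      exact (Complex.differentiableAt_log (ball_one_slit (hmem w hw))).comp (x := w) (f := fun w => 1 + (n : ℂ) * w / a ^ n)
        (by fun_prop)
    · rw [hφ]; simp
    · intro w hw
      simp only [mem_compl_iff, mem_singleton_iff, hφ]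
      exact mul_ne_zero ha (Complex.exp_ne_zero _)
    · intro w hw
      simp only
      rw [hpow w hw]
      field_simp
      ring
  refine le_antisymm ?_ ?_
  · exact iSup₂_le fun r hr => ENNReal.ofReal_le_ofReal (hSub r hr)
  · exact le_iSup₂ (f := fun (r : ℝ) (_ : r ∈ _) => ENNReal.ofReal r) R hmemS

lemma meanlog {c : ℂ} {r : ℝ} (hr : 0 < r) (hrc : r < ‖c‖) :
    ∫ θ in (0:ℝ)..(2*π), Real.log (‖c + (r:ℂ) * Complex.exp ((θ:ℂ)*Complex.I)‖)
      = 2 * π * Real.log (‖c‖) := by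
  have hc : c ≠ 0 := by
    intro h; rw [h] at hrc; simp at hrc; linarith
  set f : ℂ → ℂ := fun z => Complex.log (z / c) + Complex.log c with hf
  have hdiff : ∀ z ∈ closedBall c r, DifferentiableAt ℂ f z := by
    intro z hz
    have hmem : z / c ∈ ball (1:ℂ) 1 := by
      simp only [mem_ball, Complex.dist_eq]
      have : z / c - 1 = (z - c) / c := by field_simp
      rw [this, norm_div, div_lt_one (norm_pos_iff.mpr hc)]
      calc ‖z - c‖ ≤ r := by simpa [Complex.dist_eq] using hz
        _ < ‖c‖ := hrc
    apply DifferentiableAt.add_const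
    exact (Complex.differentiableAt_log (ball_one_slit hmem)).comp (x := z) (f := fun z => z / c) (by fun_prop)
  have key := Complex.circleIntegral_sub_center_inv_smul_of_differentiable_on_off_countable
    (f := f) (c := c) (s := ∅) hr countable_empty
    (fun z hz => ((hdiff z hz).continuousAt).continuousWithinAt)
    (fun z hz => hdiff z (ball_subset_closedBall hz.1))
  rw [circleIntegral] at key
  have hint : ∀ θ ∈ uIcc (0:ℝ) (2*π),
      deriv (circleMap c r) θ • (circleMap c r θ - c)⁻¹ • f (circleMap c r θ)
        = Complex.I * f (circleMap c r θ) := by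
    intro θ _
    rw [deriv_circleMap, circleMap_sub_center, smul_eq_mul, smul_eq_mul]
    have h0 : circleMap 0 r θ ≠ 0 := fun h => hr.ne' (circleMap_eq_center_iff.mp h)
    field_simp
  rw [intervalIntegral.integral_congr hint, intervalIntegral.integral_const_mul] at key
  have key2 : (∫ θ in (0:ℝ)..(2*π), f (circleMap c r θ)) = 2 * π * f c := by
    have hI : (Complex.I : ℂ) ≠ 0 := Complex.I_ne_zero
    apply mul_left_cancel₀ hI
    rw [key, smul_eq_mul]; ring
  have hcont : Continuous fun θ : ℝ => f (circleMap c r θ) := by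
    rw [continuous_iff_continuousAt]
    intro θ
    exact ((hdiff _ (sphere_subset_closedBall
      (circleMap_mem_sphere c hr.le θ))).continuousAt).comp (continuous_circleMap c r).continuousAt
  have hre : (∫ θ in (0:ℝ)..(2*π), (f (circleMap c r θ)).re)
      = (∫ θ in (0:ℝ)..(2*π), f (circleMap c r θ)).re := by
    exact Complex.reCLM.intervalIntegral_comp_comm (hcont.intervalIntegrable _ _)
  have hfre : ∀ θ : ℝ, (f (circleMap c r θ)).re
      = Real.log (‖c + (r:ℂ) * Complex.exp ((θ:ℂ)*Complex.I)‖) := by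
    intro θ
    have hz : circleMap c r θ ≠ 0 := by
      intro h0
      have h1 : ‖circleMap c r θ - c‖ = r := by
        rw [circleMap_sub_center, norm_circleMap_zero, abs_of_pos hr]
      rw [h0, zero_sub, norm_neg] at h1
      rw [h1] at hrc
      linarith
    have hzc : circleMap c r θ = c + (r:ℂ) * Complex.exp ((θ:ℂ)*Complex.I) := rfl
    rw [hf]
    simp only [Complex.add_re, Complex.log_re, norm_div]
    rw [Real.log_div (norm_ne_zero_iff.mpr hz) (norm_ne_zero_iff.mpr hc)]
    rw [← hzc]
    ring
  calc ∫ θ in (0:ℝ)..(2*π), Real.log (‖c + (r:ℂ) * Complex.exp ((θ:ℂ)*Complex.I)‖)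
      = ∫ θ in (0:ℝ)..(2*π), (f (circleMap c r θ)).re := by
        exact intervalIntegral.integral_congr fun θ _ => (hfre θ).symm
    _ = (∫ θ in (0:ℝ)..(2*π), f (circleMap c r θ)).re := hre
    _ = ((2 * (π:ℂ) * f c) : ℂ).re := by rw [key2]
    _ = 2 * π * Real.log (‖c‖) := by
        have : f c = Complex.log c := by
          rw [hf]; simp [div_self hc]
        rw [this]
        simp [Complex.mul_re, Complex.log_re]

/-- on `X = ℂ* = ℂ \ {0}`, for `ω = z^k dz` with `k ≠ −1` (primitive
`G(z) = z^{k+1}/(k+1)`), `ρ(a, z^k dz, ℂ*) = |a^{k+1}/(k+1)|`; it tends to `0` as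
`a → 0` when `k ≥ 0` and as `a → ∞` when `k ≤ −2`.  Moreover
`ψ(a) = max{−log ρ(a, dz, ℂ*), −log ρ(a, z⁻²dz, ℂ*)}` (primitives `id` and `−z⁻¹`)
is continuous subharmonic on `ℂ*` with `ψ(a) → ∞` as `a → 0` and as `a → ∞`. -/
theorem rho_zk_dz_on_Cstar (k : ℤ) (hk : k ≠ -1) :
    (∀ a : ℂ, a ≠ 0 →
      rhoC (fun z => z ^ (k + 1) / ((k : ℂ) + 1)) a {(0 : ℂ)}ᶜ
        = ENNReal.ofReal (‖a ^ (k + 1) / ((k : ℂ) + 1)‖)) ∧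
    (0 ≤ k → Filter.Tendsto (fun a : ℂ => rhoC (fun z => z ^ (k + 1) / ((k : ℂ) + 1)) a {(0 : ℂ)}ᶜ)
      (𝓝[{(0 : ℂ)}ᶜ] 0) (𝓝 0)) ∧
    (k ≤ -2 → Filter.Tendsto (fun a : ℂ => rhoC (fun z => z ^ (k + 1) / ((k : ℂ) + 1)) a {(0 : ℂ)}ᶜ)
      (Bornology.cobounded ℂ) (𝓝 0)) ∧
    (ContinuousOn
        (fun a : ℂ => max (-Real.log ((rhoC id a {(0 : ℂ)}ᶜ).toReal))
          (-Real.log ((rhoC (fun z => -z⁻¹) a {(0 : ℂ)}ᶜ).toReal))) {(0 : ℂ)}ᶜ ∧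
      SubharmonicOn
        (fun a : ℂ => max (-Real.log ((rhoC id a {(0 : ℂ)}ᶜ).toReal))
          (-Real.log ((rhoC (fun z => -z⁻¹) a {(0 : ℂ)}ᶜ).toReal))) {(0 : ℂ)}ᶜ ∧
      Filter.Tendsto
        (fun a : ℂ => max (-Real.log ((rhoC id a {(0 : ℂ)}ᶜ).toReal))
          (-Real.log ((rhoC (fun z => -z⁻¹) a {(0 : ℂ)}ᶜ).toReal)))
        (𝓝[{(0 : ℂ)}ᶜ] 0) Filter.atTop ∧
      Filter.Tendsto
        (fun a : ℂ => max (-Real.log ((rhoC id a {(0 : ℂ)}ᶜ).toReal))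
          (-Real.log ((rhoC (fun z => -z⁻¹) a {(0 : ℂ)}ᶜ).toReal)))
        (Bornology.cobounded ℂ) Filter.atTop) := by
  set n : ℤ := k + 1 with hn'
  have hn : n ≠ 0 := by omega
  have hnC : (n : ℂ) ≠ 0 := Int.cast_ne_zero.mpr hn
  have hcast : ((k : ℂ) + 1) = (n : ℂ) := by rw [hn']; push_cast; ring
  have hfun : (fun z : ℂ => z ^ (k+1) / ((k:ℂ)+1)) = fun z => z ^ n / (n:ℂ) := by
    funext z; rw [hcast, hn']
  have h1 : ∀ a : ℂ, a ≠ 0 →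
      rhoC (fun z => z ^ (k + 1) / ((k : ℂ) + 1)) a {(0 : ℂ)}ᶜ
        = ENNReal.ofReal (‖a ^ (k + 1) / ((k : ℂ) + 1)‖) := by
    intro a ha
    rw [hfun, hcast, ← hn']
    exact rho_eq n hn a ha
  refine ⟨h1, ?_, ?_, ?_⟩
  · intro hk0
    set m : ℕ := n.toNat with hm'
    have hnm : n = (m : ℤ) := by omega
    have hm : m ≠ 0 := by omega
    have hg : Filter.Tendsto (fun a : ℂ => ENNReal.ofReal
        (‖a‖ ^ m / ‖(n : ℂ)‖)) (𝓝[{(0 : ℂ)}ᶜ] 0) (𝓝 0) := by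
      have hcontg : Continuous fun a : ℂ => ENNReal.ofReal
          (‖a‖ ^ m / ‖(n : ℂ)‖) :=
        ENNReal.continuous_ofReal.comp ((continuous_norm.pow m).div_const _)
      have h4 : Filter.Tendsto (fun a : ℂ => ENNReal.ofReal
          (‖a‖ ^ m / ‖(n : ℂ)‖)) (𝓝[{(0 : ℂ)}ᶜ] 0) _ :=
        (hcontg.tendsto 0).mono_left nhdsWithin_le_nhds
      simpa [zero_pow hm] using h4
    refine hg.congr' ?_
    filter_upwards [self_mem_nhdsWithin] with a ha
    rw [h1 a ha, hcast, ← hn', norm_div]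
    congr 2
    rw [norm_zpow, hnm, zpow_natCast]
  · intro hk2
    set m : ℕ := (-n).toNat with hm'
    have hnm : n = -(m : ℤ) := by omega
    have hm : m ≠ 0 := by omega
    have hg : Filter.Tendsto (fun a : ℂ => ENNReal.ofReal
        ((‖a‖ ^ m)⁻¹ / ‖(n : ℂ)‖)) (Bornology.cobounded ℂ) (𝓝 0) := by
      have h2 : Filter.Tendsto (fun a : ℂ => (‖a‖ ^ m)⁻¹ / ‖(n : ℂ)‖)
          (Bornology.cobounded ℂ) (𝓝 0) := by
        have h3 : Filter.Tendsto (fun a : ℂ => ‖a‖ ^ m)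
            (Bornology.cobounded ℂ) Filter.atTop :=
          (Filter.tendsto_pow_atTop hm).comp tendsto_norm_cobounded_atTop
        have := (tendsto_inv_atTop_zero.comp h3).div_const (‖(n : ℂ)‖)
        simpa using this
      have := ENNReal.tendsto_ofReal h2
      simpa using this
    refine hg.congr' ?_
    filter_upwards [Bornology.eventually_ne_cobounded 0] with a ha
    rw [h1 a ha, hcast, ← hn', norm_div]
    congr 2
    rw [norm_zpow, hnm]
    simp [zpow_natCast]
  · set ψ : ℂ → ℝ := fun a : ℂ => max (-Real.log ((rhoC id a {(0 : ℂ)}ᶜ).toReal))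
        (-Real.log ((rhoC (fun z => -z⁻¹) a {(0 : ℂ)}ᶜ).toReal)) with hψdef
    -- identify ρ for the two primitives
    have hid : ∀ a : ℂ, a ≠ 0 → (rhoC id a {(0 : ℂ)}ᶜ).toReal = ‖a‖ := by
      intro a ha
      have hfun : (fun z : ℂ => z ^ (1:ℤ) / ((1:ℤ) : ℂ)) = id := by
        funext z; simp
      have := rho_eq 1 one_ne_zero a ha
      rw [hfun] at this
      rw [this]
      simp [ENNReal.toReal_ofReal (norm_nonneg _)]
    have hinv : ∀ a : ℂ, a ≠ 0 →
        (rhoC (fun z => -z⁻¹) a {(0 : ℂ)}ᶜ).toReal = (‖a‖)⁻¹ := by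
      intro a ha
      have hfun : (fun z : ℂ => z ^ (-1:ℤ) / ((-1:ℤ) : ℂ)) = fun z : ℂ => -z⁻¹ := by
        funext z; simp [zpow_neg]; ring
      have := rho_eq (-1) (by norm_num) a ha
      rw [hfun] at this
      rw [this]
      rw [ENNReal.toReal_ofReal (norm_nonneg _)]
      simp [zpow_neg]
    have hψ : ∀ a : ℂ, a ≠ 0 → ψ a = |Real.log (‖a‖)| := by
      intro a ha
      rw [hψdef]
      simp only
      rw [hid a ha, hinv a ha, Real.log_inv, neg_neg, max_comm, ← abs_eq_max_neg]
    -- continuity of the model function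
    have hcont' : ∀ a : ℂ, a ≠ 0 → ContinuousAt (fun a : ℂ => |Real.log (‖a‖)|) a := by
      intro a ha
      exact continuous_abs.continuousAt.comp
        ((Real.continuousAt_log (norm_ne_zero_iff.mpr ha)).comp
          continuous_norm.continuousAt)
    have hcontOn : ContinuousOn ψ {(0 : ℂ)}ᶜ := by
      apply ContinuousOn.congr (f := fun a : ℂ => |Real.log (‖a‖)|)
      · exact fun a ha => (hcont' a ha).continuousWithinAt
      · exact fun a ha => hψ a ha
    refine ⟨hcontOn, ⟨hcontOn.upperSemicontinuousOn, ?_⟩, ?_, ?_⟩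
    · -- submean inequality
      intro c r hr hsub
      have hc0 : c ≠ 0 := fun h => hsub (mem_closedBall_self hr.le) (by simp [h])
      have hrc : r < ‖c‖ := by
        by_contra hle
        push_neg at hle
        have h0 : (0:ℂ) ∈ closedBall c r := by
          simp only [mem_closedBall, Complex.dist_eq, zero_sub, norm_neg]
          exact hle
        exact hsub h0 rfl
      have hzne : ∀ θ : ℝ, c + (r:ℂ) * Complex.exp ((θ:ℂ)*Complex.I) ≠ 0 := by
        intro θ h0
        have h1 : ‖(r:ℂ) * Complex.exp ((θ:ℂ)*Complex.I)‖ = r := by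
          rw [norm_mul, Complex.norm_exp]
          simp [abs_of_pos hr]
        have : ‖c‖ = r := by
          have : c = -((r:ℂ) * Complex.exp ((θ:ℂ)*Complex.I)) := by linear_combination h0
          rw [this, norm_neg, h1]
        linarith
      have hLcont : Continuous fun θ : ℝ =>
          Real.log (‖c + (r:ℂ) * Complex.exp ((θ:ℂ)*Complex.I)‖) := by
        rw [continuous_iff_continuousAt]
        intro θ
        have hA : ContinuousAt (fun θ : ℝ =>
            ‖c + (r:ℂ) * Complex.exp ((θ:ℂ)*Complex.I)‖) θ :=
          (continuous_norm.comp (by fun_prop :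
            Continuous fun θ : ℝ => c + (r:ℂ) * Complex.exp ((θ:ℂ)*Complex.I))).continuousAt
        exact hA.log (norm_ne_zero_iff.mpr (hzne θ))
      have hInt1 : IntervalIntegrable (fun θ : ℝ =>
          Real.log (‖c + (r:ℂ) * Complex.exp ((θ:ℂ)*Complex.I)‖))
          MeasureTheory.volume 0 (2*π) := hLcont.intervalIntegrable _ _
      have hInt2 : IntervalIntegrable (fun θ : ℝ =>
          |Real.log (‖c + (r:ℂ) * Complex.exp ((θ:ℂ)*Complex.I)‖)|)
          MeasureTheory.volume 0 (2*π) := (continuous_abs.comp hLcont).intervalIntegrable _ _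
      have hIcongr : (∫ θ in (0:ℝ)..(2*π), ψ (c + (r:ℂ) * Complex.exp ((θ:ℂ)*Complex.I)))
          = ∫ θ in (0:ℝ)..(2*π),
            |Real.log (‖c + (r:ℂ) * Complex.exp ((θ:ℂ)*Complex.I)‖)| :=
        intervalIntegral.integral_congr fun θ _ => hψ _ (hzne θ)
      rw [hψ c hc0, hIcongr]
      have hπ : (0:ℝ) < 1 / (2*π) := by positivity
      have hmono : ∀ g : ℝ → ℝ, (∀ θ, g θ ≤ |Real.log (
          ‖c + (r:ℂ) * Complex.exp ((θ:ℂ)*Complex.I)‖)|) →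
          IntervalIntegrable g MeasureTheory.volume 0 (2*π) →
          (∫ θ in (0:ℝ)..(2*π), g θ) ≤ ∫ θ in (0:ℝ)..(2*π),
            |Real.log (‖c + (r:ℂ) * Complex.exp ((θ:ℂ)*Complex.I)‖)| := by
        intro g hg hgi
        exact intervalIntegral.integral_mono_on (by positivity) hgi hInt2 fun θ _ => hg θ
      rw [abs_eq_max_neg]
      apply max_le
      · have := hmono _ (fun θ => le_abs_self _) hInt1
        calc Real.log (‖c‖)
            = (1/(2*π)) * ∫ θ in (0:ℝ)..(2*π),
              Real.log (‖c + (r:ℂ) * Complex.exp ((θ:ℂ)*Complex.I)‖) := by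
              rw [meanlog hr hrc]
              field_simp
          _ ≤ _ := mul_le_mul_of_nonneg_left this hπ.le
      · have h2 := hmono (fun θ => -(Real.log (
          ‖c + (r:ℂ) * Complex.exp ((θ:ℂ)*Complex.I)‖))) (fun θ => neg_le_abs _) hInt1.neg
        calc -Real.log (‖c‖)
            = (1/(2*π)) * ∫ θ in (0:ℝ)..(2*π),
              -(Real.log (‖c + (r:ℂ) * Complex.exp ((θ:ℂ)*Complex.I)‖)) := by
              rw [intervalIntegral.integral_neg, meanlog hr hrc]
              field_simp
          _ ≤ _ := mul_le_mul_of_nonneg_left h2 hπ.le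
    · -- tendsto at 0
      have habs : Filter.Tendsto (fun a : ℂ => ‖a‖) (𝓝[{(0 : ℂ)}ᶜ] 0) (𝓝[≠] 0) := by
        rw [tendsto_nhdsWithin_iff]
        constructor
        · have := (continuous_norm (E := ℂ)).tendsto 0
          simpa using this.mono_left nhdsWithin_le_nhds
        · filter_upwards [self_mem_nhdsWithin] with a ha
          exact norm_ne_zero_iff.mpr ha
      have hlog : Filter.Tendsto (fun a : ℂ => -Real.log (‖a‖))
          (𝓝[{(0 : ℂ)}ᶜ] 0) Filter.atTop := by
        apply Filter.tendsto_neg_atTop_iff.mpr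
        exact Real.tendsto_log_nhdsNE_zero.comp habs
      apply Filter.tendsto_atTop_mono' _ _ hlog
      filter_upwards [self_mem_nhdsWithin] with a ha
      rw [hψ a ha]
      exact neg_le_abs _
    · -- tendsto at infinity
      have hlog : Filter.Tendsto (fun a : ℂ => Real.log (‖a‖))
          (Bornology.cobounded ℂ) Filter.atTop := by
        have := Real.tendsto_log_atTop.comp (tendsto_norm_cobounded_atTop (E := ℂ))
        exact this
      apply Filter.tendsto_atTop_mono' _ _ hlog
      filter_upwards [Bornology.eventually_ne_cobounded 0] with a ha
      rw [hψ a ha]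
      exact le_abs_self _

end
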